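/- arXiv:1402.3963 — 3 statements merged into one kernel-verified Lean document; each statement's English description precedes it below -/
import Mathlib

section
/- Let U be a connected open subset of ℂⁿ, let f : U → ℂ be holomorphic, and suppose (gᵢ : Uᵢ → ℂ)_{i ∈ ℕ} is a countable family of holomorphic functions on connected open subsets Uᵢ ⊆ U such that for every a ∈ U there is i with a ∈ Uᵢ and gᵢ(a) = f(a). Let U′ be the union of those Uᵢ on which gᵢ agrees with f identically. Then U ∖ U′ has Lebesgue measure zero; moreover if n = 1 then U ∖ U′ is countable. -/
open MeasureTheory Set Metric Topology

lemma countable_of_forall_isolated {α : Type*} [TopologicalSpace α]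
    [SecondCountableTopology α] {S : Set α}
    (h : ∀ x ∈ S, ∃ u : Set α, IsOpen u ∧ x ∈ u ∧ u ∩ S ⊆ {x}) : S.Countable := by
  obtain ⟨B, hBc, -, hB⟩ := TopologicalSpace.exists_countable_basis α
  have key : ∀ x : S, ∃ b : Set α, b ∈ B ∧ (x : α) ∈ b ∧ b ∩ S ⊆ {(x : α)} := by
    rintro ⟨x, hx⟩
    obtain ⟨u, hu, hxu, husub⟩ := h x hx
    obtain ⟨b, hbB, hxb, hbu⟩ := hB.exists_subset_of_mem_open hxu hu
    exact ⟨b, hbB, hxb, fun y hy => husub ⟨hbu hy.1, hy.2⟩⟩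
  choose φ hφB hφmem hφsub using key
  haveI := hBc.to_subtype
  rw [← Set.countable_coe_iff]
  have hinj : Function.Injective (fun x : S => (⟨φ x, hφB x⟩ : B)) := by
    intro x y hxy
    have : (φ x : Set α) = φ y := congrArg Subtype.val hxy
    have hy : (y : α) ∈ φ x ∩ S := ⟨this ▸ hφmem y, y.2⟩
    have := hφsub x hy
    exact Subtype.ext this.symm
  exact hinj.countable

/-- zeros of a 1-D holomorphic function, nonzero somewhere on a preconnected open set,
are countable -/
lemma countable_zeros_one_dim {W : Set ℂ} (hW : IsOpen W) (hWc : IsPreconnected W)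
    {φ : ℂ → ℂ} (hφ : DifferentiableOn ℂ φ W) {z₀ : ℂ} (hz₀ : z₀ ∈ W) (hz₀' : φ z₀ ≠ 0) :
    {z | z ∈ W ∧ φ z = 0}.Countable := by
  have hA : AnalyticOnNhd ℂ φ W := hφ.analyticOnNhd hW
  apply countable_of_forall_isolated
  rintro z ⟨hzW, hz0⟩
  have : ¬ (∀ᶠ w in 𝓝 z, φ w = 0) := by
    intro hev
    exact hz₀' (hA.eqOn_zero_of_preconnected_of_eventuallyEq_zero hWc hzW hev hz₀)
  rcases (hA z hzW).eventually_eq_zero_or_eventually_ne_zero with hev | hev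
  · exact absurd hev this
  · rw [eventually_nhdsWithin_iff] at hev
    obtain ⟨u, hu, huo, hzu⟩ := _root_.eventually_nhds_iff.mp hev
    refine ⟨u, huo, hzu, ?_⟩
    rintro w ⟨hwu, hwW, hw0⟩
    by_contra hne
    exact hu w hwu (by simpa using hne) hw0

variable {n : ℕ}

lemma line_differentiableOn {V : Set (Fin n → ℂ)} {h : (Fin n → ℂ) → ℂ}
    (hh : DifferentiableOn ℂ h V) (y v : Fin n → ℂ) :
    DifferentiableOn ℂ (fun t : ℂ => h (y + t • v)) {t : ℂ | y + t • v ∈ V} := by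
  apply hh.comp
  · exact ((differentiable_id.smul_const v).const_add y).differentiableOn
  · intro t ht; exact ht

lemma line_isOpen {V : Set (Fin n → ℂ)} (hV : IsOpen V) (y v : Fin n → ℂ) :
    IsOpen {t : ℂ | y + t • v ∈ V} :=
  hV.preimage (by continuity)

/-- multi-dim identity theorem, elementary version: if `h` vanishes on a ball inside a
preconnected open set, it vanishes everywhere. -/
lemma eq_zero_of_ball {V : Set (Fin n → ℂ)} (hV : IsOpen V) (hVc : IsPreconnected V)
    {h : (Fin n → ℂ) → ℂ} (hh : DifferentiableOn ℂ h V)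
    {c₀ : Fin n → ℂ} {r₀ : ℝ} (hr₀ : 0 < r₀) (hb : ball c₀ r₀ ⊆ V)
    (hzero : ∀ y ∈ ball c₀ r₀, h y = 0) : ∀ x ∈ V, h x = 0 := by
  set N : Set (Fin n → ℂ) :=
    {x | x ∈ V ∧ ∃ ε > 0, ball x ε ⊆ V ∧ ∀ y ∈ ball x ε, h y = 0} with hN
  -- propagation along segments inside a ball
  have prop : ∀ x : Fin n → ℂ, ∀ r > 0, ball x r ⊆ V →
      (∃ y ∈ ball x r, ∃ δ > 0, ∀ w ∈ ball y δ, h w = 0) → ∀ z ∈ ball x r, h z = 0 := by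
    rintro x r hr hbV ⟨y, hy, δ, hδ, hzero'⟩ z hz
    have hmc : Continuous (fun t : ℂ => y + t • (z - y)) :=
      continuous_const.add (continuous_id.smul continuous_const)
    have hTo : IsOpen ((fun t : ℂ => y + t • (z - y)) ⁻¹' ball x r) :=
      isOpen_ball.preimage hmc
    have hTc : Convex ℝ ((fun t : ℂ => y + t • (z - y)) ⁻¹' ball x r) := by
      intro a ha b hb' s t hs ht hst
      have key : y + (s • a + t • b) • (z - y)
          = s • (y + a • (z - y)) + t • (y + b • (z - y)) := by
        have hy' : y = (s + t) • y := by rw [hst, one_smul]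
        rw [add_smul, smul_assoc, smul_assoc, smul_add, smul_add]
        nth_rewrite 1 [hy']
        rw [add_smul]
        abel
      simp only [Set.mem_preimage] at ha hb' ⊢
      rw [key]
      exact convex_ball x r ha hb' hs ht hst
    have h0T : (0 : ℂ) ∈ (fun t : ℂ => y + t • (z - y)) ⁻¹' ball x r := by
      simpa using hy
    have h1T : (1 : ℂ) ∈ (fun t : ℂ => y + t • (z - y)) ⁻¹' ball x r := by
      simpa using hz
    have hφ : DifferentiableOn ℂ (fun t : ℂ => h (y + t • (z - y)))
        ((fun t : ℂ => y + t • (z - y)) ⁻¹' ball x r) :=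
      (line_differentiableOn hh y (z - y)).mono (fun t ht => hbV ht)
    have hφA := hφ.analyticOnNhd hTo
    have hev : (fun t : ℂ => h (y + t • (z - y))) =ᶠ[𝓝 (0 : ℂ)] 0 := by
      have : ∀ᶠ t in 𝓝 (0:ℂ), y + t • (z - y) ∈ ball y δ :=
        (hmc.continuousAt).preimage_mem_nhds (by simpa using ball_mem_nhds y hδ)
      filter_upwards [this] with t ht
      exact hzero' _ ht
    have := hφA.eqOn_zero_of_preconnected_of_eventuallyEq_zero hTc.isPreconnected h0T hev h1T
    simpa using this
  -- N is open
  have hNo : IsOpen N := by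
    rw [isOpen_iff]
    rintro x ⟨hxV, ε, hε, hball, hz⟩
    refine ⟨ε / 2, by positivity, ?_⟩
    rintro x' hx'
    have hsub2 : ball x' (ε / 2) ⊆ ball x ε := by
      intro w hw
      calc dist w x ≤ dist w x' + dist x' x := dist_triangle _ _ _
        _ < ε / 2 + ε / 2 := add_lt_add hw (by simpa using hx')
        _ = ε := by ring
    exact ⟨hball (hsub2 (mem_ball_self (by positivity))), ε / 2, by positivity,
      fun w hw => hball (hsub2 hw), fun w hw => hz w (hsub2 hw)⟩
  -- V ⊆ N ∪ (closure N)ᶜ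
  have hsub : V ⊆ N ∪ (closure N)ᶜ := by
    intro x hxV
    by_cases hx : x ∈ closure N
    · left
      obtain ⟨r, hr, hbV⟩ := isOpen_iff.mp hV x hxV
      obtain ⟨y, hyb, hyN⟩ := mem_closure_iff.mp hx (ball x r) isOpen_ball (mem_ball_self hr)
      obtain ⟨-, ε, hε, hεV, hεz⟩ := hyN
      exact ⟨hxV, r, hr, hbV, prop x r hr hbV ⟨y, hyb, ε, hε, hεz⟩⟩
    · right; exact hx
  have hdisj : Disjoint N (closure N)ᶜ :=
    Set.disjoint_left.mpr fun x hx hx' => hx' (subset_closure hx)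
  have hVN : V ⊆ N := by
    refine hVc.subset_left_of_subset_union hNo (isClosed_closure.isOpen_compl) hdisj hsub ?_
    exact ⟨c₀, hb (mem_ball_self hr₀), hb (mem_ball_self hr₀), r₀, hr₀, hb, hzero⟩
  intro x hx
  obtain ⟨-, ε, hε, -, hz⟩ := hVN hx
  exact hz x (mem_ball_self hε)

lemma volume_zeros {V : Set (Fin n → ℂ)} (hV : IsOpen V) (hVc : IsPreconnected V)
    {h : (Fin n → ℂ) → ℂ} (hh : DifferentiableOn ℂ h V)
    {x₁ : Fin n → ℂ} (hx₁ : x₁ ∈ V) (hx₁' : h x₁ ≠ 0) :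
    volume {x | x ∈ V ∧ h x = 0} = 0 := by
  have hZopen : IsOpen {x | x ∈ V ∧ h x ≠ 0} := by
    have : {x | x ∈ V ∧ h x ≠ 0} = V ∩ h ⁻¹' ({0}ᶜ) := by
      ext x
      simp only [Set.mem_setOf_eq, Set.mem_inter_iff, Set.mem_preimage, Set.mem_compl_iff,
        Set.mem_singleton_iff]
    rw [this]
    exact hh.continuousOn.isOpen_inter_preimage hV (isOpen_compl_singleton)
  have hZm : MeasurableSet {x | x ∈ V ∧ h x = 0} := by
    have : {x | x ∈ V ∧ h x = 0} = V \ {x | x ∈ V ∧ h x ≠ 0} := by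
      ext x
      simp only [Set.mem_setOf_eq, Set.mem_diff]
      tauto
    rw [this]
    exact hV.measurableSet.diff hZopen.measurableSet
  apply measure_null_of_locally_null
  rintro a ⟨haV, ha0⟩
  obtain ⟨R, hR, hRV⟩ := Metric.isOpen_iff.mp hV a haV
  have hB'V : ball a (R/4) ⊆ V := (ball_subset_ball (by linarith)).trans hRV
  -- find a point in the small ball where h is nonzero
  have hc : ∃ c ∈ ball a (R/4), h c ≠ 0 := by
    by_contra hcon
    push_neg at hcon
    exact hx₁' (eq_zero_of_ball hV hVc hh (by positivity) hB'V hcon x₁ hx₁)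
  obtain ⟨c, hcB, hc0⟩ := hc
  set Z' : Set (Fin n → ℂ) := {x | x ∈ V ∧ h x = 0} ∩ ball a (R/4) with hZ'
  refine ⟨Z', Filter.inter_mem self_mem_nhdsWithin
    (mem_nhdsWithin_of_mem_nhds (ball_mem_nhds a (by positivity))), ?_⟩
  have hZ'm : MeasurableSet Z' := hZm.inter measurableSet_ball
  -- the auxiliary set in the product space
  set A : Set ((Fin n → ℂ) × ℂ) :=
    {p | p.2 ∈ ball (0:ℂ) (3/2) ∧ 1 < ‖p.2‖ ∧ p.1 ∈ ball (0 : Fin n → ℂ) (R/2)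
      ∧ c + p.2 • p.1 ∈ Z'} with hA
  have hΨc : Continuous (fun p : (Fin n → ℂ) × ℂ => c + p.2 • p.1) :=
    continuous_const.add (continuous_snd.smul continuous_fst)
  have hAm : MeasurableSet A := by
    have : A = (Prod.snd ⁻¹' (ball (0:ℂ) (3/2) ∩ {t : ℂ | 1 < ‖t‖}))
        ∩ (Prod.fst ⁻¹' ball (0 : Fin n → ℂ) (R/2))
        ∩ ((fun p : (Fin n → ℂ) × ℂ => c + p.2 • p.1) ⁻¹' Z') := by
      ext p; simp [hA]; tauto
    rw [this]
    refine MeasurableSet.inter (MeasurableSet.inter ?_ ?_) (hZ'm.preimage hΨc.measurable)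
    · exact (measurable_snd (((isOpen_ball).inter
        (isOpen_lt continuous_const continuous_norm)).measurableSet))
    · exact measurable_fst (measurableSet_ball)
  -- each slice in the t-direction (fixed v) is countable, hence null
  have hslice : ∀ v : Fin n → ℂ, volume {t : ℂ | (v, t) ∈ A} = 0 := by
    intro v
    by_cases hv : v ∈ ball (0 : Fin n → ℂ) (R/2)
    · have hvn : ‖v‖ < R/2 := by simpa using hv
      have hmaps : ∀ t : ℂ, t ∈ ball (0:ℂ) (3/2) → c + t • v ∈ V := by
        intro t ht
        have htn : ‖t‖ < 3/2 := by simpa using ht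
        apply hRV
        have : ‖c + t • v - a‖ < R := by
          have h1 : ‖c - a‖ < R/4 := by simpa [dist_eq_norm] using hcB
          have h2 : ‖t • v‖ < 3/4 * R := by
            rw [norm_smul]
            calc ‖t‖ * ‖v‖ < (3/2) * (R/2) :=
              mul_lt_mul'' htn hvn (norm_nonneg _) (norm_nonneg _)
            _ = 3/4 * R := by ring
          calc ‖c + t • v - a‖ = ‖(c - a) + t • v‖ := by ring_nf
            _ ≤ ‖c - a‖ + ‖t • v‖ := norm_add_le _ _
            _ < R/4 + 3/4 * R := add_lt_add h1 h2
            _ = R := by ring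
        simpa [mem_ball, dist_eq_norm] using this
      have hφd : DifferentiableOn ℂ (fun t : ℂ => h (c + t • v)) (ball (0:ℂ) (3/2)) :=
        (line_differentiableOn hh c v).mono (fun t ht => hmaps t ht)
      have hcount : {z | z ∈ ball (0:ℂ) (3/2) ∧ h (c + z • v) = 0}.Countable := by
        refine countable_zeros_one_dim isOpen_ball (convex_ball _ _).isPreconnected hφd
          (mem_ball_self (by norm_num)) ?_
        simpa using hc0
      refine measure_mono_null ?_ (hcount.measure_zero volume)
      rintro t ⟨ht1, -, -, ⟨-, ht4⟩, -⟩
      exact ⟨ht1, ht4⟩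
    · have : {t : ℂ | (v, t) ∈ A} = ∅ := by
        ext t; simp only [hA, Set.mem_setOf_eq, Set.mem_empty_iff_false, iff_false]
        rintro ⟨-, -, hmem, -⟩; exact hv hmem
      simp [this]
  -- hence A is null
  have hAnull : (volume : Measure ((Fin n → ℂ) × ℂ)) A = 0 := by
    rw [Measure.volume_eq_prod, Measure.measure_prod_null hAm]
    exact Filter.Eventually.of_forall (fun v => hslice v)
  -- transfer through the swap to slice in the v-direction
  have hA'm : MeasurableSet (Prod.swap ⁻¹' A : Set (ℂ × (Fin n → ℂ))) :=
    hAm.preimage measurable_swap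
  have hswapnull : ((volume : Measure ℂ).prod (volume : Measure (Fin n → ℂ)))
      (Prod.swap ⁻¹' A) = 0 := by
    rw [← Measure.prod_swap, Measure.map_apply measurable_swap hA'm]
    have : Prod.swap ⁻¹' (Prod.swap ⁻¹' A : Set (ℂ × (Fin n → ℂ))) = A := by
      ext p; simp
    rw [this]
    simpa [Measure.volume_eq_prod] using hAnull
  have hae := (Measure.measure_prod_null hA'm).mp hswapnull
  -- find a good t₀ in the annulus
  have hball58 : ball (5/4 : ℂ) (1/8) ⊆ {t : ℂ | t ∈ ball (0:ℂ) (3/2) ∧ 1 < ‖t‖} := by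
    intro t ht
    have htd : ‖t - 5/4‖ < 1/8 := by simpa [dist_eq_norm] using ht
    have h54 : ‖(5/4 : ℂ)‖ = 5/4 := by
      rw [show (5/4 : ℂ) = ((5/4 : ℝ) : ℂ) by norm_num, Complex.norm_real]; norm_num
    have habs := abs_le.mp (abs_norm_sub_norm_le t (5/4 : ℂ))
    rw [h54] at habs
    refine ⟨?_, ?_⟩
    · exact mem_ball_zero_iff.mpr (by linarith [habs.2])
    · show (1:ℝ) < ‖t‖; linarith [habs.1]
  have hex : ∃ t₀ : ℂ, t₀ ∈ ball (0:ℂ) (3/2) ∧ 1 < ‖t₀‖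
      ∧ volume {v : Fin n → ℂ | (v, t₀) ∈ A} = 0 := by
    have hnull : volume {t : ℂ | ¬ volume (Prod.mk t ⁻¹' (Prod.swap ⁻¹' A)) = 0} = 0 := by
      have := hae
      rw [Filter.EventuallyEq, ae_iff] at this
      simpa using this
    have hnsub : ¬ (ball (5/4 : ℂ) (1/8)
        ⊆ {t : ℂ | ¬ volume (Prod.mk t ⁻¹' (Prod.swap ⁻¹' A)) = 0}) := by
      intro hsubb
      exact (measure_ball_pos volume (5/4 : ℂ) (by norm_num)).ne'
        (measure_mono_null hsubb hnull)
    obtain ⟨t₀, ht₀b, ht₀g⟩ := Set.not_subset.mp hnsub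
    have := hball58 ht₀b
    refine ⟨t₀, this.1, this.2, ?_⟩
    have : Prod.mk t₀ ⁻¹' (Prod.swap ⁻¹' A) = {v : Fin n → ℂ | (v, t₀) ∈ A} := rfl
    rw [← this]
    simpa using not_not.mp (by simpa using ht₀g)
  obtain ⟨t₀, ht₀b, ht₀n, ht₀s⟩ := hex
  -- the slice at t₀ is the affine preimage of Z'
  have hsliceeq : {v : Fin n → ℂ | (v, t₀) ∈ A} = (fun v => c + t₀ • v) ⁻¹' Z' := by
    ext v
    simp only [hA, Set.mem_setOf_eq, Set.mem_preimage]
    constructor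
    · rintro ⟨-, -, -, hm⟩; exact hm
    · intro hm
      refine ⟨ht₀b, ht₀n, ?_, hm⟩
      have hmB : c + t₀ • v ∈ ball a (R/4) := hm.2
      have h1 : ‖c + t₀ • v - a‖ < R/4 := by simpa [dist_eq_norm] using hmB
      have h2 : ‖c - a‖ < R/4 := by simpa [dist_eq_norm] using hcB
      have h3 : ‖t₀ • v‖ < R/2 := by
        calc ‖t₀ • v‖ = ‖(c + t₀ • v - a) - (c - a)‖ := by ring_nf
          _ ≤ ‖c + t₀ • v - a‖ + ‖c - a‖ := norm_sub_le _ _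
          _ < R/4 + R/4 := add_lt_add h1 h2
          _ = R/2 := by ring
      have h4 : ‖v‖ < R/2 := by
        have : ‖v‖ ≤ ‖t₀‖ * ‖v‖ :=
          le_mul_of_one_le_left (norm_nonneg _) ht₀n.le
        rw [← norm_smul] at this
        linarith
      simpa [mem_ball, dist_eq_norm] using h4
  rw [hsliceeq] at ht₀s
  -- transport nullity through the affine bijection
  have ht₀0 : t₀ ≠ 0 := by
    intro hzz; rw [hzz] at ht₀n; simp at ht₀n; linarith
  have hsurj : Function.Surjective (fun v : Fin n → ℂ => c + t₀ • v) := by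
    intro x
    exact ⟨t₀⁻¹ • (x - c), by
      simp [smul_smul, mul_inv_cancel₀ ht₀0]⟩
  have himg : Z' = (fun v : Fin n → ℂ => c + t₀ • v) '' ((fun v => c + t₀ • v) ⁻¹' Z') :=
    (Set.image_preimage_eq Z' hsurj).symm
  rw [himg]
  have hcomp : (fun v : Fin n → ℂ => c + t₀ • v) '' ((fun v => c + t₀ • v) ⁻¹' Z')
      = (fun x => c + x) '' ((((LinearMap.lsmul ℂ (Fin n → ℂ) t₀).restrictScalars ℝ)) ''
          ((fun v => c + t₀ • v) ⁻¹' Z')) := by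
    rw [Set.image_image]
    rfl
  rw [hcomp]
  have hlin : volume ((((LinearMap.lsmul ℂ (Fin n → ℂ) t₀).restrictScalars ℝ)) ''
      ((fun v => c + t₀ • v) ⁻¹' Z')) = 0 := by
    rw [Measure.addHaar_image_linearMap, ht₀s, mul_zero]
  calc volume ((fun x => c + x) '' ((((LinearMap.lsmul ℂ (Fin n → ℂ) t₀).restrictScalars ℝ)) ''
      ((fun v => c + t₀ • v) ⁻¹' Z')))
      = volume ((((LinearMap.lsmul ℂ (Fin n → ℂ) t₀).restrictScalars ℝ)) ''
      ((fun v => c + t₀ • v) ⁻¹' Z')) := by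
        simp [Set.image_add_left, measure_preimage_add]
    _ = 0 := hlin

lemma countable_zeros_fin_one {V : Set (Fin 1 → ℂ)} (hV : IsOpen V) (hVc : IsPreconnected V)
    {h : (Fin 1 → ℂ) → ℂ} (hh : DifferentiableOn ℂ h V)
    {x₁ : Fin 1 → ℂ} (hx₁ : x₁ ∈ V) (hx₁' : h x₁ ≠ 0) :
    {x | x ∈ V ∧ h x = 0}.Countable := by
  set L : (Fin 1 → ℂ) ≃L[ℂ] ℂ := ContinuousLinearEquiv.funUnique (Fin 1) ℂ ℂ with hL
  have hWo : IsOpen (L.symm ⁻¹' V) := hV.preimage L.symm.continuous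
  have hWc : IsPreconnected (L.symm ⁻¹' V) := by
    have himg : L '' V = L.symm ⁻¹' V := by
      ext z
      constructor
      · rintro ⟨x, hx, rfl⟩; simpa using hx
      · intro hz; exact ⟨L.symm z, hz, by simp⟩
    rw [← himg]
    exact hVc.image _ L.continuous.continuousOn
  have hφ : DifferentiableOn ℂ (fun z => h (L.symm z)) (L.symm ⁻¹' V) :=
    hh.comp (L.symm.differentiable.differentiableOn) (fun z hz => hz)
  have hz₀ : L x₁ ∈ L.symm ⁻¹' V := by simpa using hx₁
  have hz₀' : h (L.symm (L x₁)) ≠ 0 := by simpa using hx₁'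
  have hcount := countable_zeros_one_dim hWo hWc hφ hz₀ hz₀'
  have hsub : {x | x ∈ V ∧ h x = 0}
      ⊆ L.symm '' {z | z ∈ L.symm ⁻¹' V ∧ h (L.symm z) = 0} := by
    rintro x ⟨hxV, hx0⟩
    exact ⟨L x, ⟨by simpa using hxV, by simpa using hx0⟩, by simp⟩
  exact (hcount.image _).mono hsub

/-- if `f` is holomorphic on a connected open `U ⊆ ℂⁿ` and a countable family of
holomorphic functions `g i : U i → ℂ` (each `U i` connected, open, `⊆ U`) pointwise covers `f`,
then letting `U'` be the union of those `U i` on which `g i` agrees with `f` identically,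
`U ∖ U'` has Lebesgue measure zero; moreover if `n = 1` then `U ∖ U'` is countable. -/
theorem measure_zero_of_pointwise_definable
    {n : ℕ} (U : Set (Fin n → ℂ)) (hUopen : IsOpen U) (hUconn : IsConnected U)
    (f : (Fin n → ℂ) → ℂ) (hf : DifferentiableOn ℂ f U)
    (Ui : ℕ → Set (Fin n → ℂ)) (g : ℕ → ((Fin n → ℂ) → ℂ))
    (hUi_open : ∀ i, IsOpen (Ui i)) (hUi_conn : ∀ i, IsConnected (Ui i))
    (hUi_sub : ∀ i, Ui i ⊆ U)
    (hg : ∀ i, DifferentiableOn ℂ (g i) (Ui i))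
    (hcover : ∀ a ∈ U, ∃ i, a ∈ Ui i ∧ g i a = f a)
    (U' : Set (Fin n → ℂ))
    (hU' : U' = ⋃ i ∈ {i : ℕ | Set.EqOn (g i) f (Ui i)}, Ui i) :
    volume (U \ U') = 0 ∧ (n = 1 → (U \ U').Countable) := by
  have hsub : U \ U' ⊆ ⋃ i ∈ {i : ℕ | ¬ Set.EqOn (g i) f (Ui i)},
      {x | x ∈ Ui i ∧ g i x - f x = 0} := by
    intro a ha
    obtain ⟨i, hai, hgi⟩ := hcover a ha.1
    by_cases hEq : Set.EqOn (g i) f (Ui i)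
    · exact absurd (by rw [hU']; exact Set.mem_biUnion hEq hai) ha.2
    · exact Set.mem_biUnion hEq ⟨hai, sub_eq_zero.mpr hgi⟩
  have key : ∀ i, ¬ Set.EqOn (g i) f (Ui i) → ∃ x₁ ∈ Ui i, g i x₁ - f x₁ ≠ 0 := by
    intro i hno
    by_contra hcon
    push_neg at hcon
    refine hno (fun x hx => ?_)
    have := hcon x hx
    rwa [sub_eq_zero] at this
  constructor
  · refine measure_mono_null hsub ?_
    rw [measure_biUnion_null_iff (Set.to_countable _)]
    intro i hi
    obtain ⟨x₁, hx₁, hx₁'⟩ := key i hi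
    exact volume_zeros (hUi_open i) (hUi_conn i).isPreconnected
      ((hg i).sub (hf.mono (hUi_sub i))) hx₁ hx₁'
  · rintro rfl
    refine Set.Countable.mono hsub (Set.Countable.biUnion (Set.to_countable _) ?_)
    intro i hi
    obtain ⟨x₁, hx₁, hx₁'⟩ := key i hi
    exact countable_zeros_fin_one (hUi_open i) (hUi_conn i).isPreconnected
      ((hg i).sub (hf.mono (hUi_sub i))) hx₁ hx₁'
end

section
/- Let C ⊆ A ⊆ ℂ and C ⊆ B ⊆ ℂ be field extensions of a field C with tr.deg(A/C) and tr.deg(B/C) finite. Writing AB for the compositum, transcendence degree is submodular: tr.deg(AB/C) + tr.deg((A ∩ B)/C) ≤ tr.deg(A/C) + tr.deg(B/C). -/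
open Polynomial Set

noncomputable section TdAux

/-- generic transfer of algebraicity along a coefficient ring hom -/
lemma isAlg_of_ringHom {R S : Type*} [CommRing R] [CommRing S] [Algebra R ℂ] [Algebra S ℂ]
    (f : R →+* S) (hcomm : (algebraMap S ℂ).comp f = algebraMap R ℂ)
    (hinj : Function.Injective (algebraMap R ℂ)) {x : ℂ} (h : IsAlgebraic R x) :
    IsAlgebraic S x := by
  obtain ⟨p, hp, he⟩ := h
  have hfinj : Function.Injective f := by
    intro a b hab
    apply hinj
    rw [← hcomm]; simp [hab]
  refine ⟨p.map f, ?_, ?_⟩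
  · intro h0
    apply hp
    ext n
    have := congrArg (fun q => Polynomial.coeff q n) h0
    simpa using hfinj (by simpa using this)
  · rw [aeval_def, eval₂_map, hcomm]
    exact he

/-- The algebraic closure of a subfield `K` of `ℂ` inside `ℂ`, as a subfield. -/
def acl (K : Subfield ℂ) : Subfield ℂ where
  carrier := {x | IsAlgebraic K x}
  zero_mem' := isAlgebraic_zero
  one_mem' := isAlgebraic_one
  add_mem' := fun hx hy => isAlgebraic_iff_isIntegral.2
    ((isAlgebraic_iff_isIntegral.1 hx).add (isAlgebraic_iff_isIntegral.1 hy))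
  mul_mem' := fun hx hy => isAlgebraic_iff_isIntegral.2
    ((isAlgebraic_iff_isIntegral.1 hx).mul (isAlgebraic_iff_isIntegral.1 hy))
  neg_mem' := fun hx => isAlgebraic_iff_isIntegral.2 (isAlgebraic_iff_isIntegral.1 hx).neg
  inv_mem' := by
    intro x hx
    exact hx.inv

lemma mem_acl {K : Subfield ℂ} {x : ℂ} : x ∈ acl K ↔ IsAlgebraic K x := Iff.rfl

lemma le_acl (K : Subfield ℂ) : K ≤ acl K := fun x hx =>
  isAlgebraic_algebraMap (⟨x, hx⟩ : K)

lemma acl_mono {K L : Subfield ℂ} (h : K ≤ L) : acl K ≤ acl L := by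
  intro x hx
  exact isAlg_of_ringHom (Subfield.inclusion h) rfl Subtype.val_injective hx

/-- transitivity: if every element of `L` is algebraic over `K`, then anything
algebraic over `L` is algebraic over `K`. -/
lemma acl_trans {K L : Subfield ℂ} (h : K ≤ L) (hL : ∀ y ∈ L, (y : ℂ) ∈ acl K) :
    acl L ≤ acl K := by
  intro x hx
  letI : Algebra K L := (Subfield.inclusion h).toAlgebra
  haveI : IsScalarTower K L ℂ := IsScalarTower.of_algebraMap_eq fun a => rfl
  haveI : Algebra.IsIntegral ↥K ↥L := by
    constructor
    intro y
    have : IsAlgebraic K (y : ℂ) := hL y.1 y.2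
    have hint : IsIntegral K (y : ℂ) := isAlgebraic_iff_isIntegral.1 this
    exact (isIntegral_algebraMap_iff (A := ↥L) (B := ℂ) Subtype.val_injective).1 hint
  exact mem_acl.2 (isAlgebraic_iff_isIntegral.2
    (isIntegral_trans x (isAlgebraic_iff_isIntegral.1 (mem_acl.1 hx))))

/-- `K(S)`, the subfield generated by `K` and a set `S`. -/
def CF (K : Subfield ℂ) (S : Set ℂ) : Subfield ℂ := Subfield.closure (↑K ∪ S)

lemma le_CF (K : Subfield ℂ) (S : Set ℂ) : K ≤ CF K S := fun x hx =>
  Subfield.subset_closure (Or.inl hx)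

lemma subset_CF (K : Subfield ℂ) (S : Set ℂ) : S ⊆ ↑(CF K S) := fun x hx =>
  Subfield.subset_closure (Or.inr hx)

lemma CF_le {K : Subfield ℂ} {S : Set ℂ} {L : Subfield ℂ} (hK : K ≤ L) (hS : S ⊆ ↑L) :
    CF K S ≤ L :=
  Subfield.closure_le.2 (Set.union_subset hK hS)

lemma CF_mono {K : Subfield ℂ} {S T : Set ℂ} (h : S ⊆ T) : CF K S ≤ CF K T :=
  CF_le (le_CF _ _) (h.trans (subset_CF _ _))

lemma CF_empty (K : Subfield ℂ) : CF K ∅ = K := by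
  simp [CF, Subfield.closure_eq]

lemma CF_CF (K : Subfield ℂ) (S T : Set ℂ) : CF (CF K S) T = CF K (S ∪ T) := by
  apply le_antisymm
  · exact CF_le (CF_le (le_CF _ _) ((Set.subset_union_left).trans (subset_CF _ _)))
      ((Set.subset_union_right).trans (subset_CF _ _))
  · exact CF_le ((le_CF K S).trans (le_CF _ _))
      (Set.union_subset ((subset_CF K S).trans (le_CF (CF K S) T)) (subset_CF _ _))


set_option synthInstance.maxHeartbeats 1000000 in
section
variable {K : Subfield ℂ} {S : Set ℂ}

lemma adjoin_subset_CF : (Algebra.adjoin K S : Set ℂ) ⊆ ↑(Subfield.closure (↑K ∪ S)) := by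
  intro a ha
  have h1 : a ∈ (Algebra.adjoin K S).toSubring := ha
  rw [Algebra.adjoin_eq_ring_closure] at h1
  have h2 : Set.range ⇑(algebraMap K ℂ) ∪ S ⊆ ↑(Subfield.closure (↑K ∪ S)).toSubring := by
    rintro z (⟨w, rfl⟩ | hz)
    · exact Subfield.subset_closure (Or.inl w.2)
    · exact Subfield.subset_closure (Or.inr hz)
  exact Subring.closure_le.2 h2 h1

set_option synthInstance.maxHeartbeats 1000000 in
set_option maxHeartbeats 1000000 in
lemma bridge {x : ℂ} :
    IsAlgebraic (Subfield.closure (↑K ∪ S) : Subfield ℂ) x ↔ IsAlgebraic (Algebra.adjoin K S) x := by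
  set R := Algebra.adjoin K S
  set F := Subfield.closure (↑K ∪ S) with hF
  have hle : (R : Set ℂ) ⊆ ↑F := adjoin_subset_CF
  letI : Algebra R F := RingHom.toAlgebra
    { toFun := fun a => ⟨a.1, hle a.2⟩
      map_one' := rfl
      map_mul' := fun _ _ => rfl
      map_zero' := rfl
      map_add' := fun _ _ => rfl }
  haveI : IsScalarTower ↥R ↥F ℂ := IsScalarTower.of_algebraMap_eq fun a => rfl
  have hring : Subring.closure (↑K ∪ S) = R.toSubring := by
    rw [Algebra.adjoin_eq_ring_closure]
    congr 1
    congr 1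
    exact (Subtype.range_coe).symm
  haveI : IsFractionRing R F := by
    constructor
    constructor
    · rintro ⟨y, hy⟩
      have hy0 : (y : ℂ) ≠ 0 := by
        intro h0
        have : y = 0 := Subtype.ext h0
        exact (mem_nonZeroDivisors_iff_ne_zero.1 hy) this
      have : (algebraMap R F y : ℂ) ≠ 0 := hy0
      exact isUnit_iff_ne_zero.2 fun h => this (by rw [h]; rfl)
    · intro z
      have hz : (z : ℂ) ∈ Subfield.closure (↑K ∪ S) := z.2
      rw [Subfield.mem_closure_iff] at hz
      obtain ⟨y, hy, w, hw, hdiv⟩ := hz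
      rw [hring] at hy hw
      rcases eq_or_ne w 0 with rfl | hw0
      · refine ⟨⟨0, 1⟩, Subtype.ext ?_⟩
        have hz0 : (z : ℂ) = 0 := by rw [← hdiv]; simp
        show (z : ℂ) * 1 = 0
        simp [hz0]
      · have hwne : (⟨w, hw⟩ : R) ≠ 0 := fun h => hw0 (congrArg Subtype.val h)
        refine ⟨⟨⟨y, hy⟩, ⟨⟨w, hw⟩, mem_nonZeroDivisors_iff_ne_zero.2 hwne⟩⟩, Subtype.ext ?_⟩
        show (z : ℂ) * w = y
        rw [← hdiv, div_mul_cancel₀ _ hw0]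
    · intro a b h
      refine ⟨1, ?_⟩
      have hab := Subtype.ext_iff.1 h
      simpa using (Subtype.ext hab : a = b)
  exact (IsFractionRing.isAlgebraic_iff R F ℂ).symm
end

variable {K : Subfield ℂ}

/-- From independence of `insert a s`, `a` is transcendental over the ring adjoin of `s`. -/
lemma transcendental_of_algInd_insert {s : Set ℂ} {a : ℂ} (ha : a ∉ s)
    (h : AlgebraicIndependent K ((↑) : ↥(insert a s) → ℂ)) :
    Transcendental (Algebra.adjoin K s) a := by
  classical
  have hs : AlgebraicIndependent K ((↑) : ↥s → ℂ) := h.mono (Set.subset_insert a s)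
  have h2 : AlgebraicIndependent K
      ((fun (z : ↥(insert a s)) => (z : ℂ)) ∘ (Set.subtypeInsertEquivOption ha).symm) :=
    h.comp _ (Equiv.injective _)
  have h3 : ((fun (z : ↥(insert a s)) => (z : ℂ)) ∘ (Set.subtypeInsertEquivOption ha).symm)
      = fun o : Option ↥s => o.elim a (↑) := by
    ext o
    cases o <;> simp [Set.subtypeInsertEquivOption]
  rw [h3] at h2
  have := (hs.option_iff_transcendental a).1 h2
  rwa [Subtype.range_coe] at this

lemma algInd_insert {s : Set ℂ} {a : ℂ} (ha : a ∉ s)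
    (hs : AlgebraicIndependent K ((↑) : ↥s → ℂ))
    (ht : Transcendental (Algebra.adjoin K s) a) :
    AlgebraicIndependent K ((↑) : ↥(insert a s) → ℂ) := by
  classical
  convert ((Subtype.range_coe ▸ hs.option_iff_transcendental a).2 ht).comp _
    (Set.subtypeInsertEquivOption ha).injective
  ext x
  by_cases h : ↑x = a <;> simp [h, Set.subtypeInsertEquivOption]

/-- The key exchange lemma. -/
lemma exchange {x y : ℂ} (hxy : IsAlgebraic (Subfield.closure (↑K ∪ {y}) : Subfield ℂ) x)
    (hx : ¬ IsAlgebraic K x) :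
    IsAlgebraic (Subfield.closure (↑K ∪ {x}) : Subfield ℂ) y := by
  by_contra hy
  have hrx : Set.range ![x] = {x} := by
    simp [Set.range_unique]
  have hry : Set.range ![y] = {y} := by
    simp [Set.range_unique]
  have hty : Transcendental (Algebra.adjoin K (Set.range ![x])) y := by
    rw [hrx]
    exact fun h => hy ((bridge (K := K) (S := {x})).2 h)
  have h1 : AlgebraicIndependent K ![x] := algebraicIndependent_iff_transcendental.2 hx
  have h3 := (h1.option_iff_transcendental y).2 hty
  set e : Option (Fin 1) ≃ Option (Fin 1) := Equiv.swap none (some 0) with he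
  have h4 := h3.comp e e.injective
  have h4' : AlgebraicIndependent K (fun o : Option (Fin 1) => o.elim x ![y]) := by
    convert h4 using 1
    ext o
    rcases o with _ | i
    · simp [he, Equiv.swap_apply_left]
    · have : i = 0 := Subsingleton.elim _ _
      subst this
      simp [he, Equiv.swap_apply_right]
  have h5 : AlgebraicIndependent K ![y] := h4'.comp some (Option.some_injective _)
  have h6 := (h5.option_iff_transcendental x).1 h4'
  rw [hry] at h6
  exact h6 ((bridge (K := K) (S := {y})).1 hxy)

lemma acl_le_of_le_acl {L M : Subfield ℂ} (h : L ≤ acl M) : acl L ≤ acl M := by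
  have h1 : L ⊔ M ≤ acl M := sup_le h (le_acl M)
  have h2 := acl_trans (le_sup_right : M ≤ L ⊔ M) (fun y hy => h1 hy)
  exact (acl_mono le_sup_left).trans h2

lemma not_mem_acl_CF {K : Subfield ℂ} {s : Set ℂ} {a : ℂ}
    (h : Transcendental (Algebra.adjoin K s) a) : a ∉ acl (CF K s) :=
  fun ha => h ((bridge (K := K) (S := s)).1 (mem_acl.1 ha))

/-- Steinitz replacement lemma. -/
lemma repl {K : Subfield ℂ} (u : Finset ℂ) (s : Finset ℂ)
    (hind : AlgebraicIndependent K ((↑) : ↥(↑u : Set ℂ) → ℂ))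
    (hall : ∀ w ∈ u, (w : ℂ) ∈ acl (CF K ↑s)) :
    ∃ t : Finset ℂ, ↑t ⊆ (↑s : Set ℂ) ∧ t.card + u.card ≤ s.card ∧
      acl (CF K ↑s) ≤ acl (CF K (↑u ∪ ↑t)) := by
  classical
  induction u using Finset.induction_on with
  | empty =>
    exact ⟨s, Set.Subset.rfl, by simp, by simp⟩
  | @insert x u₀ hxu₀ IH =>
    have hindset : AlgebraicIndependent K ((↑) : ↥(insert x (↑u₀ : Set ℂ)) → ℂ) := by
      have : ((↑(insert x u₀) : Set ℂ)) = insert x (↑u₀ : Set ℂ) := by simp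
      rwa [this] at hind
    have hu₀ : AlgebraicIndependent K ((↑) : ↥(↑u₀ : Set ℂ) → ℂ) :=
      hindset.mono (Set.subset_insert _ _)
    obtain ⟨t, hts, hcard, hspan⟩ := IH hu₀ (fun w hw => hall w (Finset.mem_insert_of_mem hw))
    have hxacl : x ∈ acl (CF K (↑u₀ ∪ ↑t)) :=
      hspan (hall x (Finset.mem_insert_self _ _))
    have htx : Transcendental (Algebra.adjoin K (↑u₀ : Set ℂ)) x :=
      transcendental_of_algInd_insert (by simpa using hxu₀) hindset
    have hxnot : x ∉ acl (CF K (↑u₀ : Set ℂ)) := not_mem_acl_CF htx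
    -- choose minimal t' ⊆ t with x ∈ acl (CF K (↑u₀ ∪ ↑t'))
    set P : Finset ℂ → Prop := fun t' => x ∈ acl (CF K (↑u₀ ∪ ↑t')) with hP
    have hPt : P t := hxacl
    obtain ⟨t', ht'mem, ht'min⟩ := Finset.exists_min_image
      ((t.powerset).filter P) Finset.card ⟨t, by simp [hPt]⟩
    have ht't : t' ⊆ t := Finset.mem_powerset.1 (Finset.mem_filter.1 ht'mem).1
    have hPt' : P t' := (Finset.mem_filter.1 ht'mem).2
    have ht'ne : t'.Nonempty := by
      rcases Finset.eq_empty_or_nonempty t' with rfl | h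
      · refine absurd ?_ hxnot
        have := hPt'
        rw [hP] at this
        simpa using this
      · exact h
    obtain ⟨z, hz⟩ := ht'ne
    have hminz : ¬ P (t'.erase z) := by
      intro hcon
      have hmem : t'.erase z ∈ (t.powerset).filter P :=
        Finset.mem_filter.2 ⟨Finset.mem_powerset.2 ((Finset.erase_subset _ _).trans ht't), hcon⟩
      have := ht'min _ hmem
      have hlt : (t'.erase z).card < t'.card := Finset.card_erase_lt_of_mem hz
      omega
    -- exchange
    set K₁ := CF K (↑u₀ ∪ ↑(t'.erase z)) with hK₁
    have hceq : Subfield.closure (↑K₁ ∪ {z}) = CF K (↑u₀ ∪ ↑t') := by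
      show CF K₁ {z} = _
      rw [hK₁, CF_CF]
      congr 1
      ext w
      simp only [Set.mem_union, Finset.coe_erase, Set.mem_diff, Set.mem_singleton_iff,
        Finset.mem_coe]
      constructor
      · rintro ((h | ⟨h, _⟩) | rfl)
        · exact Or.inl h
        · exact Or.inr h
        · exact Or.inr hz
      · rintro (h | h)
        · exact Or.inl (Or.inl h)
        · by_cases hwz : w = z
          · exact Or.inr hwz
          · exact Or.inl (Or.inr ⟨h, hwz⟩)
    have hxy : IsAlgebraic (Subfield.closure (↑K₁ ∪ {z}) : Subfield ℂ) x := by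
      rw [hceq]; exact hPt'
    have hxnot₁ : ¬ IsAlgebraic K₁ x := hminz
    have hzalg := exchange hxy hxnot₁
    -- z is algebraic over CF K (insert x u₀ ∪ (t.erase z))
    have hzle : Subfield.closure (↑K₁ ∪ ({x} : Set ℂ)) ≤
        CF K (↑(insert x u₀) ∪ ↑(t.erase z)) := by
      show CF K₁ {x} ≤ _
      rw [hK₁, CF_CF]
      apply CF_mono
      intro w hw
      simp only [Set.mem_union, Finset.coe_erase, Set.mem_diff, Set.mem_singleton_iff,
        Finset.mem_coe, Finset.coe_insert, Set.mem_insert_iff] at *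
      rcases hw with ((h | ⟨h1, h2⟩) | rfl)
      · exact Or.inl (Or.inr h)
      · exact Or.inr ⟨ht't h1, h2⟩
      · exact Or.inl (Or.inl rfl)
    have hzM : z ∈ acl (CF K (↑(insert x u₀) ∪ ↑(t.erase z))) :=
      acl_mono hzle hzalg
    -- assemble
    refine ⟨t.erase z, ((Finset.erase_subset _ _).trans hts : (↑(t.erase z) : Set ℂ) ⊆ ↑s), ?_, ?_⟩
    · have h1 : (t.erase z).card = t.card - 1 := Finset.card_erase_of_mem (ht't hz)
      have h2 : (insert x u₀).card = u₀.card + 1 := Finset.card_insert_of_notMem hxu₀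
      have h3 : 1 ≤ t.card := Finset.card_pos.2 ⟨z, ht't hz⟩
      omega
    · refine hspan.trans (acl_le_of_le_acl ?_)
      set M := CF K (↑(insert x u₀) ∪ ↑(t.erase z)) with hM
      apply CF_le ((le_CF K _).trans (le_acl M))
      intro w hw
      rcases hw with hw | hw
      · exact (le_acl M) (subset_CF _ _ (Or.inl (by simpa using Or.inr hw)))
      · by_cases hwz : w = z
        · subst hwz; exact hzM
        · exact (le_acl M) (subset_CF _ _ (Or.inr (by
            simp only [Finset.coe_erase, Set.mem_diff, Set.mem_singleton_iff, Finset.mem_coe]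
            exact ⟨hw, hwz⟩)))


lemma excard {K : Subfield ℂ} (u s : Finset ℂ)
    (hind : AlgebraicIndependent K ((↑) : ↥(↑u : Set ℂ) → ℂ))
    (hall : ∀ w ∈ u, (w : ℂ) ∈ acl (CF K ↑s)) : u.card ≤ s.card := by
  obtain ⟨t, -, h, -⟩ := repl u s hind hall
  omega




end TdAux

/-- `x` is algebraic over the subfield `C` of `ℂ`. -/
def AlgebraicOver (C : Subfield ℂ) (x : ℂ) : Prop :=
  ∃ p : Polynomial C, p ≠ 0 ∧ Polynomial.eval₂ C.subtype x p = 0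

/-- `td(E/C) ≤ m`: there is a set of `m` elements of `E` over which (together with `C`)
every element of `E` is algebraic. -/
def TdLE (C E : Subfield ℂ) (m : ℕ) : Prop :=
  ∃ s : Finset ℂ, s.card = m ∧ (s : Set ℂ) ⊆ (E : Set ℂ) ∧
    ∀ x ∈ E, AlgebraicOver (Subfield.closure ((C : Set ℂ) ∪ (s : Set ℂ))) x

/-- The transcendence degree of `E` over `C` (as a natural number, when finite). -/
noncomputable def td (C E : Subfield ℂ) : ℕ := sInf {m | TdLE C E m}

/-- transcendence degree is submodular: for subfields `C ⊆ A, B ⊆ ℂ` with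
`td(A/C)`, `td(B/C)` finite, `td(AB/C) + td((A ∩ B)/C) ≤ td(A/C) + td(B/C)`, where `AB` is
the compositum `A ⊔ B`. -/
theorem td_submodular (C A B : Subfield ℂ) (hCA : C ≤ A) (hCB : C ≤ B)
    (hfinA : ∃ m, TdLE C A m) (hfinB : ∃ m, TdLE C B m) :
    td C (A ⊔ B) + td C (A ⊓ B) ≤ td C A + td C B := by
  classical
  obtain ⟨s, hscard, hsA, hsspan⟩ := Nat.sInf_mem hfinA
  obtain ⟨t, htcard, htB, htspan⟩ := Nat.sInf_mem hfinB
  have hsspan' : ∀ x ∈ A, x ∈ acl (CF C ↑s) := fun x hx => hsspan x hx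
  have htspan' : ∀ x ∈ B, x ∈ acl (CF C ↑t) := fun x hx => htspan x hx
  -- maximal algebraically independent subset of A ⊓ B
  obtain ⟨U, -, hUmax⟩ := exists_maximal_algebraicIndependent (∅ : Set ℂ) (↑(A ⊓ B) : Set ℂ)
    (Set.empty_subset _) (algebraicIndependent_empty (K := C))
  obtain ⟨hUind, hUsub⟩ := hUmax.prop
  -- U is finite
  have hUfin : U.Finite := by
    by_contra hinf
    have hinf : U.Infinite := hinf
    obtain ⟨w, hwU, hwcard⟩ := hinf.exists_subset_card_eq (s.card + 1)
    have hwind : AlgebraicIndependent C ((↑) : ↥(↑w : Set ℂ) → ℂ) := hUind.mono hwU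
    have := excard w s hwind (fun z hz => hsspan' z (Set.mem_of_mem_inter_left
      (hUsub (hwU (by exact_mod_cast hz)))))
    omega
  set uF := hUfin.toFinset with huF
  have huFU : (↑uF : Set ℂ) = U := hUfin.coe_toFinset
  have huFind : AlgebraicIndependent C ((↑) : ↥(↑uF : Set ℂ) → ℂ) := by rw [huFU]; exact hUind
  have huFsub : (↑uF : Set ℂ) ⊆ ↑(A ⊓ B) := by rw [huFU]; exact hUsub
  -- td C (A ⊓ B) ≤ uF.card
  have hinf_le : td C (A ⊓ B) ≤ uF.card := by
    apply Nat.sInf_le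
    refine ⟨uF, rfl, huFsub, ?_⟩
    intro x hx
    show IsAlgebraic (Subfield.closure (↑C ∪ ↑uF) : Subfield ℂ) x
    by_contra hxalg
    have hxU : x ∉ U := by
      intro hxU
      exact hxalg ((le_acl _) (subset_CF C (↑uF : Set ℂ) (by rw [huFU]; exact hxU)))
    have htrans : Transcendental (Algebra.adjoin C U) x := by
      intro halg
      exact hxalg (by
        have := (bridge (K := C) (S := U)).2 halg
        rwa [huFU])
    have hins : AlgebraicIndependent C ((↑) : ↥(insert x U) → ℂ) :=
      algInd_insert hxU hUind htrans
    have : insert x U ⊆ U := hUmax.le_of_ge ⟨hins, Set.insert_subset hx hUsub⟩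
      (Set.subset_insert _ _)
    exact hxU (this (Set.mem_insert _ _))
  -- replacement inside A
  obtain ⟨t₁, ht₁s, ht₁card, ht₁span⟩ := repl uF s huFind
    (fun w hw => hsspan' w (Set.mem_of_mem_inter_left (huFsub hw)))
  -- t₁ ∪ t spans A ⊔ B
  set M := CF C (↑(t₁ ∪ t) : Set ℂ) with hM
  have htM : CF C ↑t ≤ M := CF_mono (by intro z hz; simp only [Finset.coe_union,
    Set.mem_union, Finset.mem_coe] at *; exact Or.inr hz)
  have hBM : ∀ x ∈ B, x ∈ acl M := fun x hx => acl_mono htM (htspan' x hx)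
  have hAM : ∀ x ∈ A, x ∈ acl M := by
    intro x hx
    have h1 : x ∈ acl (CF C (↑uF ∪ ↑t₁)) := ht₁span (hsspan' x hx)
    have h2 : acl (CF C ((↑uF : Set ℂ) ∪ ↑t₁)) ≤ acl M := by
      apply acl_le_of_le_acl
      apply CF_le ((le_CF C _).trans (le_acl M))
      rintro w (hw | hw)
      · exact hBM w (Set.mem_of_mem_inter_right (huFsub hw))
      · exact (le_acl M) (subset_CF _ _ (by
          simp only [Finset.coe_union, Set.mem_union, Finset.mem_coe] at *
          exact Or.inl hw))
    exact h2 h1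
  have hsup_le : td C (A ⊔ B) ≤ (t₁ ∪ t).card := by
    apply Nat.sInf_le
    refine ⟨t₁ ∪ t, rfl, ?_, ?_⟩
    · intro z hz
      rcases Finset.mem_union.1 (by exact_mod_cast hz) with h | h
      · exact SetLike.le_def.1 le_sup_left (hsA (ht₁s h))
      · exact SetLike.le_def.1 le_sup_right (htB (Finset.mem_coe.2 h))
    · intro x hx
      show IsAlgebraic (Subfield.closure (↑C ∪ ↑(t₁ ∪ t)) : Subfield ℂ) x
      have : A ⊔ B ≤ acl M := sup_le (fun y hy => hAM y hy) (fun y hy => hBM y hy)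
      exact this hx
  have hcard_union : (t₁ ∪ t).card ≤ t₁.card + t.card := Finset.card_union_le _ _
  have hstd : s.card = td C A := hscard
  have httd : t.card = td C B := htcard
  omega
end

section
/- Let (X, cl) be a pregeometry, let C ⊆ X be closed, and suppose b₁, …, bₙ ∈ X. If there exist 'derivations' ∂₁, …, ∂ₙ in a set D of functions X → k (k a field) characterizing cl over C in the sense that x ∈ cl(C ∪ S) iff ∂x = 0 for all ∂ ∈ D vanishing on S, then b₁, …, bₙ are cl-independent over C if and only if there exist ∂₁, …, ∂ₙ ∈ D (each vanishing on C) with ∂ᵢbⱼ = δᵢⱼ (Kronecker delta). -/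
/-- A pregeometry (finitary matroid) on a set `X`. -/
structure Pregeometry (X : Type*) where
  cl : Set X → Set X
  subset_cl : ∀ S, S ⊆ cl S
  mono : ∀ S T, S ⊆ T → cl S ⊆ cl T
  idem : ∀ S, cl (cl S) = cl S
  exchange : ∀ (S : Set X) (a b : X), a ∈ cl (S ∪ {b}) → a ∉ cl S → b ∈ cl (S ∪ {a})
  finChar : ∀ (S : Set X) (a : X), a ∈ cl S → ∃ F : Finset X, ↑F ⊆ S ∧ a ∈ cl ↑F

/-- in a pregeometry `(X, cl)` with `C` closed, if a `k`-vector space `D` of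
functions `X → k` ("derivations") characterizes `cl` over `C` (i.e. `b ∈ cl (C ∪ S)` iff
every `d ∈ D` vanishing on `C ∪ S` vanishes at `b`), then `b₁, …, bₙ` are `cl`-independent
over `C` iff there exist `d₁, …, dₙ ∈ D`, each vanishing on `C`, with `dᵢ bⱼ = δᵢⱼ`. -/
theorem independence_iff_dual_derivations
    {X : Type*} (P : Pregeometry X) {k : Type*} [Field k]
    (D : Submodule k (X → k)) (C : Set X) (hC : P.cl C = C)
    (hchar : ∀ S : Set X, S.Finite → ∀ b : X,
      (b ∈ P.cl (C ∪ S) ↔ ∀ d ∈ D, (∀ x ∈ C ∪ S, d x = 0) → d b = 0))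
    (n : ℕ) (b : Fin n → X) :
    (∀ i : Fin n, b i ∉ P.cl (C ∪ {x | ∃ j : Fin n, j ≠ i ∧ x = b j})) ↔
      ∃ d : Fin n → (X → k), (∀ i, d i ∈ D) ∧ (∀ i, ∀ x ∈ C, d i x = 0) ∧
        ∀ i j, d i (b j) = if i = j then 1 else 0 := by
  have hfin : ∀ i : Fin n, Set.Finite {x | ∃ j : Fin n, j ≠ i ∧ x = b j} := fun i =>
    (Set.finite_range b).subset (fun x ⟨j, _, hx⟩ => ⟨j, hx.symm⟩)
  constructor
  · intro h
    have key : ∀ i : Fin n, ∃ e, e ∈ D ∧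
        (∀ x ∈ C ∪ {x | ∃ j : Fin n, j ≠ i ∧ x = b j}, e x = 0) ∧ e (b i) ≠ 0 := by
      intro i
      by_contra hcon
      push_neg at hcon
      exact h i ((hchar _ (hfin i) (b i)).mpr (fun d hd hz => hcon d hd hz))
    choose e he hz hne using key
    refine ⟨fun i => (e i (b i))⁻¹ • e i, fun i => D.smul_mem _ (he i), ?_, ?_⟩
    · intro i x hx
      simp [hz i x (Or.inl hx)]
    · intro i j
      by_cases hij : i = j
      · subst hij
        simp [inv_mul_cancel₀ (hne i)]
      · have : e i (b j) = 0 := hz i (b j) (Or.inr ⟨j, fun hji => hij hji.symm, rfl⟩)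
        simp [hij, this]
  · rintro ⟨d, hd, hC0, hδ⟩ i hi
    have := (hchar _ (hfin i) (b i)).mp hi (d i) (hd i) ?_
    · have h1 := hδ i i
      simp at h1
      rw [this] at h1
      exact zero_ne_one h1
    · rintro x (hx | ⟨j, hj, rfl⟩)
      · exact hC0 i x hx
      · have := hδ i j
        simpa [Ne.symm hj] using this
end
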